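/- Let T > 0, let V : [0,T] → M₂(ℂ) be continuous, and let h : {(x,s) : 0 ≤ x ≤ s ≤ T} → M₂(ℂ) be continuous. Let D := { y ∈ C¹([0,T]; ℂ²) : y(T) = 0, y′(T) = 0, y₁(0) = 0 } and, for y ∈ D, define (L y)(x) := J y′(x) + V(x) y(x) + ∫_x^T h(x,s) y(s) ds. If ∫₀^T (L y)(x) · conj(z(x)) dx = ∫₀^T y(x) · conj((L z)(x)) dx for all y, z ∈ D, then V(x) is Hermitian (V(x)* = V(x)) for every x ∈ [0,T] and h(x,s) = 0 for all 0 ≤ x ≤ s ≤ T. -/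

import Mathlib

open MeasureTheory Set Matrix Metric

noncomputable section

/-- The matrix `J = [[0,1],[-1,0]]`. -/
def Jmat : Matrix (Fin 2) (Fin 2) ℂ := !![0, 1; -1, 0]

/-- The domain `{(x,s) : 0 ≤ x ≤ s ≤ T}`. -/
def DeltaT (T : ℝ) : Set (ℝ × ℝ) := {z | 0 ≤ z.1 ∧ z.1 ≤ z.2 ∧ z.2 ≤ T}

/-- The operator `(L y)(x) = J y'(x) + V(x) y(x) + ∫_x^T h(x,s) y(s) ds`. -/
def Lop18 (T : ℝ) (V : ℝ → Matrix (Fin 2) (Fin 2) ℂ)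
    (h : ℝ → ℝ → Matrix (Fin 2) (Fin 2) ℂ) (y : ℝ → Fin 2 → ℂ) (x : ℝ) : Fin 2 → ℂ :=
  Jmat.mulVec (derivWithin y (Icc (0 : ℝ) T) x) + (V x).mulVec (y x)
    + ∫ s in x..T, (h x s).mulVec (y s)

/-- Membership in the domain `D` of `L`. -/
def memD (T : ℝ) (y : ℝ → Fin 2 → ℂ) : Prop :=
  ContDiffOn ℝ 1 y (Icc 0 T) ∧ y T = 0 ∧ derivWithin y (Icc (0 : ℝ) T) T = 0 ∧ y 0 0 = 0

namespace Stmt18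

lemma Jconj (i j : Fin 2) : (starRingEnd ℂ) (Jmat i j) = Jmat i j := by
  fin_cases i <;> fin_cases j <;> simp [Jmat]

lemma Jskew (i j : Fin 2) : Jmat j i = - Jmat i j := by
  fin_cases i <;> fin_cases j <;> simp [Jmat]

/-- 1D localization: a continuous function whose pairing with every smooth test
function supported in an open set `U` vanishes must vanish on `U`. -/
lemma loc1 {g : ℝ → ℂ} {U : Set ℝ} (hU : IsOpen U) (hg : Continuous g) {x₀ : ℝ} (hx : x₀ ∈ U)
    (H : ∀ φ : ℝ → ℝ, ContDiff ℝ (↑(⊤ : ℕ∞)) φ → HasCompactSupport φ → tsupport φ ⊆ U →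
      ∫ x : ℝ, (φ x : ℂ) * g x = 0) : g x₀ = 0 := by
  have h1 : ∀ᵐ x ∂(volume : Measure ℝ), x ∈ U → g x = 0 := by
    apply hU.ae_eq_zero_of_integral_contDiff_smul_eq_zero
      (hg.locallyIntegrable.locallyIntegrableOn U)
    intro φ hφ h2 h3
    simpa [Complex.real_smul] using H φ hφ h2 h3
  have h2 : g =ᶠ[ae ((volume : Measure ℝ).restrict U)] (fun _ => 0) := by
    filter_upwards [ae_restrict_mem hU.measurableSet, ae_restrict_of_ae h1] with x hx1 hx2
    exact hx2 hx1
  exact Measure.eqOn_open_of_ae_eq h2 hU hg.continuousOn continuousOn_const hx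

/-- The basic test functions: a scalar bump times a basis vector. -/
def tfun (φ : ℝ → ℝ) (j : Fin 2) : ℝ → Fin 2 → ℂ := fun t => Pi.single j ((φ t : ℂ))

lemma tfun_hasDerivAt {φ : ℝ → ℝ} (hφ : Differentiable ℝ φ) (j : Fin 2) (t : ℝ) :
    HasDerivAt (tfun φ j) (Pi.single j (((deriv φ t : ℝ) : ℂ))) t := by
  rw [hasDerivAt_pi]
  intro k
  rcases eq_or_ne k j with rfl | hk
  · simpa [tfun] using ((hφ t).hasDerivAt).ofReal_comp
  · simp only [tfun, Pi.single_apply, if_neg hk]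
    simpa [hk] using (hasDerivAt_const t (0 : ℂ))

lemma tfun_contDiff {φ : ℝ → ℝ} {n : WithTop ℕ∞} (hφ : ContDiff ℝ n φ) (j : Fin 2) :
    ContDiff ℝ n (tfun φ j) := by
  rw [contDiff_pi]
  intro k
  rcases eq_or_ne k j with rfl | hk
  · simpa [tfun, Function.comp_def] using Complex.ofRealCLM.contDiff.comp hφ
  · simp only [tfun, Pi.single_apply, if_neg hk]
    exact contDiff_const

lemma tfun_continuous {φ : ℝ → ℝ} (hφ : Continuous φ) (j : Fin 2) :
    Continuous (tfun φ j) :=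
  continuous_pi fun k => by
    rcases eq_or_ne k j with rfl | hk
    · simpa [tfun, Function.comp_def] using Complex.continuous_ofReal.comp hφ
    · simp only [tfun, Pi.single_apply, if_neg hk]; exact continuous_const

lemma tfun_derivWithin {T : ℝ} (hT : 0 < T) {φ : ℝ → ℝ} (hφ : Differentiable ℝ φ)
    (j : Fin 2) {x : ℝ} (hx : x ∈ Icc (0:ℝ) T) :
    derivWithin (tfun φ j) (Icc (0:ℝ) T) x = Pi.single j (((deriv φ x : ℝ) : ℂ)) :=
  ((tfun_hasDerivAt hφ j x).hasDerivWithinAt).derivWithin (uniqueDiffOn_Icc hT x hx)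

lemma zero_of_nmem {φ : ℝ → ℝ} {U : Set ℝ} (hsupp : tsupport φ ⊆ U) {x : ℝ} (hx : x ∉ U) :
    φ x = 0 :=
  image_eq_zero_of_notMem_tsupport (fun hmem => hx (hsupp hmem))

lemma deriv_zero_of_nmem {φ : ℝ → ℝ} {U : Set ℝ} (hsupp : tsupport φ ⊆ U) {x : ℝ}
    (hx : x ∉ U) : deriv φ x = 0 := by
  by_contra hc
  exact hx (hsupp (support_deriv_subset (Function.mem_support.2 hc)))

lemma tfun_memD {T : ℝ} (hT : 0 < T) {φ : ℝ → ℝ} (hφ : ContDiff ℝ (↑(⊤ : ℕ∞)) φ)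
    (hsupp : tsupport φ ⊆ Ioo 0 T) (j : Fin 2) : memD T (tfun φ j) := by
  have hd : Differentiable ℝ φ := hφ.differentiable (by simp)
  have hT0 : (T : ℝ) ∉ Ioo (0:ℝ) T := fun hmem => lt_irrefl T hmem.2
  have h00 : (0 : ℝ) ∉ Ioo (0:ℝ) T := fun hmem => lt_irrefl 0 hmem.1
  refine ⟨((tfun_contDiff hφ j).of_le (by exact_mod_cast le_top)).contDiffOn, ?_, ?_, ?_⟩
  · simp [tfun, zero_of_nmem hsupp hT0]
  · rw [tfun_derivWithin hT hd j (by exact ⟨hT.le, le_refl T⟩)]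
    simp [deriv_zero_of_nmem hsupp hT0]
  · simp [tfun, zero_of_nmem hsupp h00]

end Stmt18

namespace Stmt18

lemma sum_mul_single_conj (f : Fin 2 → ℂ) (i : Fin 2) (c : ℝ) :
    (∑ k, f k * (starRingEnd ℂ) (Pi.single (M := fun _ : Fin 2 => ℂ) i ((c : ℂ)) k)) = f i * (c : ℂ) := by
  fin_cases i <;>
    simp [Fin.sum_univ_two, Pi.single_apply, Complex.conj_ofReal]

lemma sum_single_mul_conj (g : Fin 2 → ℂ) (j : Fin 2) (c : ℝ) :
    (∑ k, Pi.single (M := fun _ : Fin 2 => ℂ) j ((c : ℂ)) k * (starRingEnd ℂ) (g k))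
      = (c : ℂ) * (starRingEnd ℂ) (g j) := by
  fin_cases j <;>
    simp [Fin.sum_univ_two, Pi.single_apply]

lemma mulVec_tfun (A : Matrix (Fin 2) (Fin 2) ℂ) (φ : ℝ → ℝ) (j : Fin 2) (t : ℝ) (i : Fin 2) :
    A.mulVec (tfun φ j t) i = A i j * (φ t : ℂ) := by
  simp [tfun, Matrix.mulVec_single]

lemma kernel_integrand_continuous {h : ℝ → ℝ → Matrix (Fin 2) (Fin 2) ℂ}
    (hh : ∀ i j, Continuous fun z : ℝ × ℝ => h z.1 z.2 i j) {φ : ℝ → ℝ} (hφ : Continuous φ)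
    (j : Fin 2) (x : ℝ) : Continuous fun s => (h x s).mulVec (tfun φ j s) := by
  apply continuous_pi
  intro k
  have : (fun s => (h x s).mulVec (tfun φ j s) k) = fun s => h x s k j * (φ s : ℂ) := by
    funext s; exact mulVec_tfun _ _ _ _ _
  rw [this]
  exact ((hh k j).comp (Continuous.prodMk_right x)).mul (Complex.continuous_ofReal.comp hφ)

lemma Lop18_tfun_apply {T : ℝ} (hT : 0 < T) {V : ℝ → Matrix (Fin 2) (Fin 2) ℂ}
    {h : ℝ → ℝ → Matrix (Fin 2) (Fin 2) ℂ}
    (hh : ∀ i j, Continuous fun z : ℝ × ℝ => h z.1 z.2 i j)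
    {φ : ℝ → ℝ} (hφ : ContDiff ℝ (↑(⊤ : ℕ∞)) φ) (i j : Fin 2) {x : ℝ} (hx : x ∈ Icc (0:ℝ) T) :
    Lop18 T V h (tfun φ j) x i
      = Jmat i j * ((deriv φ x : ℝ) : ℂ) + V x i j * ((φ x : ℝ) : ℂ)
        + ∫ s in x..T, h x s i j * ((φ s : ℝ) : ℂ) := by
  have hd : Differentiable ℝ φ := hφ.differentiable (by simp)
  have hint : IntervalIntegrable (fun s => (h x s).mulVec (tfun φ j s)) volume x T :=
    (kernel_integrand_continuous hh hd.continuous j x).intervalIntegrable x T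
  have h3 : (∫ s in x..T, (h x s).mulVec (tfun φ j s)) i
      = ∫ s in x..T, h x s i j * ((φ s : ℝ) : ℂ) := by
    have := (ContinuousLinearMap.intervalIntegral_comp_comm
      (ContinuousLinearMap.proj (R := ℂ) (φ := fun _ : Fin 2 => ℂ) i) hint).symm
    simp only [ContinuousLinearMap.proj_apply] at this
    exact this.trans (intervalIntegral.integral_congr fun s _ => mulVec_tfun _ _ _ _ _)
  show (Jmat.mulVec (derivWithin (tfun φ j) (Icc (0:ℝ) T) x)) i
      + ((V x).mulVec (tfun φ j x)) i + (∫ s in x..T, (h x s).mulVec (tfun φ j s)) i = _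
  rw [tfun_derivWithin hT hd j hx, h3]
  simp [Matrix.mulVec_single, tfun]

end Stmt18

namespace Stmt18

lemma tfun_apply (φ : ℝ → ℝ) (j : Fin 2) (t : ℝ) :
    tfun φ j t = Pi.single (M := fun _ : Fin 2 => ℂ) j ((φ t : ℝ) : ℂ) := rfl

lemma kernel_continuous {T : ℝ} {h : ℝ → ℝ → Matrix (Fin 2) (Fin 2) ℂ}
    (hh : ∀ i j, Continuous fun z : ℝ × ℝ => h z.1 z.2 i j) (a b : Fin 2)
    {χ : ℝ → ℝ} (hχ : Continuous χ) :
    Continuous fun x => ∫ s in x..T, h x s a b * ((χ s : ℝ) : ℂ) := by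
  have hunc : Continuous (Function.uncurry fun x s => h x s a b * ((χ s : ℝ) : ℂ)) := by
    have : (Function.uncurry fun x s => h x s a b * ((χ s : ℝ) : ℂ))
        = fun z : ℝ × ℝ => h z.1 z.2 a b * ((χ z.2 : ℝ) : ℂ) := rfl
    rw [this]
    exact (hh a b).mul (Complex.continuous_ofReal.comp (hχ.comp continuous_snd))
  have heq : (fun x => ∫ s in x..T, h x s a b * ((χ s : ℝ) : ℂ))
      = fun x => - ∫ s in T..x, h x s a b * ((χ s : ℝ) : ℂ) := by
    funext x; rw [← intervalIntegral.integral_symm]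
  rw [heq]
  exact (intervalIntegral.continuous_parametric_intervalIntegral_of_continuous hunc continuous_id).neg

lemma keyIdentity {T : ℝ} (hT : 0 < T) {V : ℝ → Matrix (Fin 2) (Fin 2) ℂ}
    (hV : ∀ i j, Continuous fun x => V x i j)
    {h : ℝ → ℝ → Matrix (Fin 2) (Fin 2) ℂ}
    (hh : ∀ i j, Continuous fun z : ℝ × ℝ => h z.1 z.2 i j)
    (hsym : ∀ y z : ℝ → Fin 2 → ℂ, memD T y → memD T z →
      (∫ x in (0 : ℝ)..T, ∑ k, Lop18 T V h y x k * (starRingEnd ℂ) (z x k))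
        = ∫ x in (0 : ℝ)..T, ∑ k, y x k * (starRingEnd ℂ) (Lop18 T V h z x k))
    (i j : Fin 2) {φ ψ : ℝ → ℝ}
    (hφ : ContDiff ℝ (↑(⊤ : ℕ∞)) φ) (hφc : HasCompactSupport φ) (hφs : tsupport φ ⊆ Ioo 0 T)
    (hψ : ContDiff ℝ (↑(⊤ : ℕ∞)) ψ) (hψc : HasCompactSupport ψ) (hψs : tsupport ψ ⊆ Ioo 0 T) :
    (∫ x in (0:ℝ)..T, (V x i j * (((φ x : ℝ) : ℂ) * ((ψ x : ℝ) : ℂ))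
        + ((ψ x : ℝ) : ℂ) * ∫ s in x..T, h x s i j * ((φ s : ℝ) : ℂ)))
      = ∫ x in (0:ℝ)..T, ((starRingEnd ℂ) (V x j i) * (((φ x : ℝ) : ℂ) * ((ψ x : ℝ) : ℂ))
        + ((φ x : ℝ) : ℂ) * (starRingEnd ℂ) (∫ s in x..T, h x s j i * ((ψ s : ℝ) : ℂ))) := by
  have h1top : (1 : WithTop ℕ∞) ≤ (↑(⊤ : ℕ∞) : WithTop ℕ∞) := by exact_mod_cast le_top
  have hφd : Differentiable ℝ φ := hφ.differentiable (by simp)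
  have hψd : Differentiable ℝ ψ := hψ.differentiable (by simp)
  have hφ' : Continuous (deriv φ) := hφ.continuous_deriv h1top
  have hψ' : Continuous (deriv ψ) := hψ.continuous_deriv h1top
  have cφ : Continuous fun x => ((φ x : ℝ) : ℂ) := Complex.continuous_ofReal.comp hφd.continuous
  have cψ : Continuous fun x => ((ψ x : ℝ) : ℂ) := Complex.continuous_ofReal.comp hψd.continuous
  have cφ' : Continuous fun x => ((deriv φ x : ℝ) : ℂ) := Complex.continuous_ofReal.comp hφ'
  have cψ' : Continuous fun x => ((deriv ψ x : ℝ) : ℂ) := Complex.continuous_ofReal.comp hψ'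
  have hKφ : Continuous fun x => ∫ s in x..T, h x s i j * ((φ s : ℝ) : ℂ) :=
    kernel_continuous hh i j hφd.continuous
  have hKψ : Continuous fun x => ∫ s in x..T, h x s j i * ((ψ s : ℝ) : ℂ) :=
    kernel_continuous hh j i hψd.continuous
  have HS := hsym (tfun φ j) (tfun ψ i) (tfun_memD hT hφ hφs j) (tfun_memD hT hψ hψs i)
  have EL : EqOn (fun x => ∑ k, Lop18 T V h (tfun φ j) x k * (starRingEnd ℂ) (tfun ψ i x k))
      (fun x => Jmat i j * (((deriv φ x : ℝ) : ℂ) * ((ψ x : ℝ) : ℂ))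
        + (V x i j * (((φ x : ℝ) : ℂ) * ((ψ x : ℝ) : ℂ))
          + ((ψ x : ℝ) : ℂ) * ∫ s in x..T, h x s i j * ((φ s : ℝ) : ℂ)))
      (uIcc (0:ℝ) T) := by
    intro x hx
    rw [uIcc_of_le hT.le] at hx
    simp only [tfun_apply]
    rw [sum_mul_single_conj (fun k => Lop18 T V h (tfun φ j) x k) i (ψ x),
      Lop18_tfun_apply hT hh hφ i j hx]
    ring
  have ER : EqOn (fun x => ∑ k, tfun φ j x k * (starRingEnd ℂ) (Lop18 T V h (tfun ψ i) x k))
      (fun x => (- Jmat i j) * (((φ x : ℝ) : ℂ) * ((deriv ψ x : ℝ) : ℂ))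
        + ((starRingEnd ℂ) (V x j i) * (((φ x : ℝ) : ℂ) * ((ψ x : ℝ) : ℂ))
          + ((φ x : ℝ) : ℂ) * (starRingEnd ℂ) (∫ s in x..T, h x s j i * ((ψ s : ℝ) : ℂ))))
      (uIcc (0:ℝ) T) := by
    intro x hx
    rw [uIcc_of_le hT.le] at hx
    simp only [tfun_apply]
    rw [sum_single_mul_conj (fun k => Lop18 T V h (tfun ψ i) x k) j (φ x),
      Lop18_tfun_apply hT hh hψ j i hx, map_add, map_add, _root_.map_mul, _root_.map_mul, Jconj,
      Complex.conj_ofReal, Complex.conj_ofReal, Jskew i j]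
    ring
  rw [intervalIntegral.integral_congr EL, intervalIntegral.integral_congr ER] at HS
  -- split the integrals
  have ha : IntervalIntegrable
      (fun x => Jmat i j * (((deriv φ x : ℝ) : ℂ) * ((ψ x : ℝ) : ℂ))) volume 0 T :=
    ((continuous_const.mul (cφ'.mul cψ))).intervalIntegrable 0 T
  have hb : IntervalIntegrable
      (fun x => (- Jmat i j) * (((φ x : ℝ) : ℂ) * ((deriv ψ x : ℝ) : ℂ))) volume 0 T :=
    ((continuous_const.mul (cφ.mul cψ'))).intervalIntegrable 0 T
  have hF : IntervalIntegrable (fun x => V x i j * (((φ x : ℝ) : ℂ) * ((ψ x : ℝ) : ℂ))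
      + ((ψ x : ℝ) : ℂ) * ∫ s in x..T, h x s i j * ((φ s : ℝ) : ℂ)) volume 0 T :=
    (((hV i j).mul (cφ.mul cψ)).add (cψ.mul hKφ)).intervalIntegrable 0 T
  have hG : IntervalIntegrable (fun x => (starRingEnd ℂ) (V x j i)
        * (((φ x : ℝ) : ℂ) * ((ψ x : ℝ) : ℂ))
      + ((φ x : ℝ) : ℂ) * (starRingEnd ℂ) (∫ s in x..T, h x s j i * ((ψ s : ℝ) : ℂ)))
      volume 0 T :=
    (((continuous_star.comp (hV j i)).mul (cφ.mul cψ)).add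
      (cφ.mul (continuous_star.comp hKψ))).intervalIntegrable 0 T
  rw [intervalIntegral.integral_add ha hF, intervalIntegral.integral_add hb hG] at HS
  -- the derivative terms are equal by the fundamental theorem of calculus
  have hftc : (∫ x in (0:ℝ)..T, (deriv φ x * ψ x + φ x * deriv ψ x)) = 0 := by
    rw [intervalIntegral.integral_deriv_mul_eq_sub (fun x _ => (hφd x).hasDerivAt)
      (fun x _ => (hψd x).hasDerivAt) (hφ'.intervalIntegrable 0 T)
      (hψ'.intervalIntegrable 0 T)]
    have hT0 : (T : ℝ) ∉ Ioo (0:ℝ) T := fun hmem => lt_irrefl T hmem.2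
    have h00 : (0 : ℝ) ∉ Ioo (0:ℝ) T := fun hmem => lt_irrefl 0 hmem.1
    simp [zero_of_nmem hφs hT0, zero_of_nmem hφs h00]
  have hsplit : (∫ x in (0:ℝ)..T, deriv φ x * ψ x) = - ∫ x in (0:ℝ)..T, φ x * deriv ψ x := by
    have hadd := intervalIntegral.integral_add
      ((hφ'.mul hψd.continuous).intervalIntegrable (μ := volume) (0:ℝ) T)
      ((hφd.continuous.mul hψ').intervalIntegrable (μ := volume) (0:ℝ) T)
    simp only [Pi.mul_apply] at hadd
    rw [hadd] at hftc
    linarith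
  have hcast1 : (∫ x in (0:ℝ)..T, (((deriv φ x : ℝ) : ℂ) * ((ψ x : ℝ) : ℂ)))
      = (((∫ x in (0:ℝ)..T, deriv φ x * ψ x) : ℝ) : ℂ) := by
    rw [← intervalIntegral.integral_ofReal]
    apply intervalIntegral.integral_congr
    intro x _
    push_cast
    ring
  have hcast2 : (∫ x in (0:ℝ)..T, (((φ x : ℝ) : ℂ) * ((deriv ψ x : ℝ) : ℂ)))
      = (((∫ x in (0:ℝ)..T, φ x * deriv ψ x) : ℝ) : ℂ) := by
    rw [← intervalIntegral.integral_ofReal]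
    apply intervalIntegral.integral_congr
    intro x _
    push_cast
    ring
  have hab : (∫ x in (0:ℝ)..T, Jmat i j * (((deriv φ x : ℝ) : ℂ) * ((ψ x : ℝ) : ℂ)))
      = ∫ x in (0:ℝ)..T, (- Jmat i j) * (((φ x : ℝ) : ℂ) * ((deriv ψ x : ℝ) : ℂ)) := by
    rw [intervalIntegral.integral_const_mul, intervalIntegral.integral_const_mul,
      hcast1, hcast2, hsplit]
    push_cast
    ring
  rw [hab] at HS
  exact add_left_cancel HS

end Stmt18

namespace Stmt18

lemma hvanish {T : ℝ} (hT : 0 < T) {V : ℝ → Matrix (Fin 2) (Fin 2) ℂ}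
    (hV : ∀ i j, Continuous fun x => V x i j)
    {h : ℝ → ℝ → Matrix (Fin 2) (Fin 2) ℂ}
    (hh : ∀ i j, Continuous fun z : ℝ × ℝ => h z.1 z.2 i j)
    (hsym : ∀ y z : ℝ → Fin 2 → ℂ, memD T y → memD T z →
      (∫ x in (0 : ℝ)..T, ∑ k, Lop18 T V h y x k * (starRingEnd ℂ) (z x k))
        = ∫ x in (0 : ℝ)..T, ∑ k, y x k * (starRingEnd ℂ) (Lop18 T V h z x k))
    (i j : Fin 2) {x₀ s₀ : ℝ} (hx0 : 0 < x₀) (hxs : x₀ < s₀) (hsT : s₀ < T) :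
    h x₀ s₀ i j = 0 := by
  set b : ℝ := (x₀ + s₀) / 2 with hbdef
  have hxb : x₀ < b := by rw [hbdef]; linarith
  have hbs : b < s₀ := by rw [hbdef]; linarith
  have hb0 : 0 < b := lt_trans hx0 hxb
  have hbT : b < T := lt_trans hbs hsT
  have step1 : ∀ φ : ℝ → ℝ, ContDiff ℝ (↑(⊤ : ℕ∞)) φ → HasCompactSupport φ →
      tsupport φ ⊆ Ioo b T → (∫ s in b..T, h x₀ s i j * ((φ s : ℝ) : ℂ)) = 0 := by
    intro φ hφ hφc hφs
    have hφsT : tsupport φ ⊆ Ioo 0 T := hφs.trans (Ioo_subset_Ioo hb0.le le_rfl)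
    have hφcont : Continuous φ := hφ.continuous
    set G : ℝ → ℂ := fun x => ∫ s in b..T, h x s i j * ((φ s : ℝ) : ℂ) with hGdef
    have hGc : Continuous G := by
      apply intervalIntegral.continuous_parametric_intervalIntegral_of_continuous'
        (f := fun x s => h x s i j * ((φ s : ℝ) : ℂ))
      have : (Function.uncurry fun x s => h x s i j * ((φ s : ℝ) : ℂ))
          = fun z : ℝ × ℝ => h z.1 z.2 i j * ((φ z.2 : ℝ) : ℂ) := rfl
      rw [this]
      exact (hh i j).mul (Complex.continuous_ofReal.comp (hφcont.comp continuous_snd))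
    have claim : ∀ ψ : ℝ → ℝ, ContDiff ℝ (↑(⊤ : ℕ∞)) ψ → HasCompactSupport ψ →
        tsupport ψ ⊆ Ioo 0 b → ∫ x : ℝ, ((ψ x : ℝ) : ℂ) * G x = 0 := by
      intro ψ hψ hψc hψs
      have hψsT : tsupport ψ ⊆ Ioo 0 T := hψs.trans (Ioo_subset_Ioo le_rfl hbT.le)
      have KI := keyIdentity hT hV hh hsym i j hφ hφc hφsT hψ hψc hψsT
      have hdisj : ∀ x : ℝ, ((φ x : ℝ) : ℂ) * ((ψ x : ℝ) : ℂ) = 0 := by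
        intro x
        rcases eq_or_ne (φ x) 0 with h0 | h0
        · simp [h0]
        · have hxm : x ∈ Ioo b T := hφs (subset_tsupport _ (Function.mem_support.2 h0))
          have : ψ x = 0 := zero_of_nmem hψs (fun hm => absurd hm.2 (not_lt.2 hxm.1.le))
          simp [this]
      have hRHS : (∫ x in (0:ℝ)..T, ((starRingEnd ℂ) (V x j i)
            * (((φ x : ℝ) : ℂ) * ((ψ x : ℝ) : ℂ))
          + ((φ x : ℝ) : ℂ) * (starRingEnd ℂ)
              (∫ s in x..T, h x s j i * ((ψ s : ℝ) : ℂ)))) = 0 := by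
        have hz : EqOn (fun x => (starRingEnd ℂ) (V x j i)
              * (((φ x : ℝ) : ℂ) * ((ψ x : ℝ) : ℂ))
            + ((φ x : ℝ) : ℂ) * (starRingEnd ℂ)
                (∫ s in x..T, h x s j i * ((ψ s : ℝ) : ℂ)))
            (fun _ => (0 : ℂ)) (uIcc (0:ℝ) T) := by
          intro x hx
          rw [uIcc_of_le hT.le] at hx
          rcases eq_or_ne (φ x) 0 with h0 | h0
          · simp [h0, hdisj x]
          · have hxm : x ∈ Ioo b T := hφs (subset_tsupport _ (Function.mem_support.2 h0))
            have hzero : EqOn (fun s => h x s j i * ((ψ s : ℝ) : ℂ))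
                (fun _ => (0 : ℂ)) (uIcc x T) := by
              intro s hs
              rw [uIcc_of_le hx.2] at hs
              have : ψ s = 0 := zero_of_nmem hψs
                (fun hm => absurd hm.2 (not_lt.2 (le_trans hxm.1.le hs.1)))
              simp [this]
            show _ + _ = (0:ℂ)
            rw [intervalIntegral.integral_congr hzero]
            simp [hdisj x]
        rw [intervalIntegral.integral_congr hz]
        simp
      rw [hRHS] at KI
      have hL : EqOn (fun x => V x i j * (((φ x : ℝ) : ℂ) * ((ψ x : ℝ) : ℂ))
          + ((ψ x : ℝ) : ℂ) * ∫ s in x..T, h x s i j * ((φ s : ℝ) : ℂ))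
          (fun x => ((ψ x : ℝ) : ℂ) * G x) (uIcc (0:ℝ) T) := by
        intro x hx
        rw [uIcc_of_le hT.le] at hx
        rcases eq_or_ne (ψ x) 0 with h0 | h0
        · show _ + _ = _
          simp [h0, hdisj x]
        · have hxm : x ∈ Ioo 0 b := hψs (subset_tsupport _ (Function.mem_support.2 h0))
          have int1 : IntervalIntegrable (fun s => h x s i j * ((φ s : ℝ) : ℂ)) volume x b :=
            (((hh i j).comp (Continuous.prodMk_right x)).mul
              (Complex.continuous_ofReal.comp hφcont)).intervalIntegrable x b
          have int2 : IntervalIntegrable (fun s => h x s i j * ((φ s : ℝ) : ℂ)) volume b T :=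
            (((hh i j).comp (Continuous.prodMk_right x)).mul
              (Complex.continuous_ofReal.comp hφcont)).intervalIntegrable b T
          have hzero1 : (∫ s in x..b, h x s i j * ((φ s : ℝ) : ℂ)) = 0 := by
            have hz : EqOn (fun s => h x s i j * ((φ s : ℝ) : ℂ))
                (fun _ => (0 : ℂ)) (uIcc x b) := by
              intro s hs
              rw [uIcc_of_le hxm.2.le] at hs
              have : φ s = 0 := zero_of_nmem hφs (fun hm => absurd hs.2 (not_le.2 hm.1))
              simp [this]
            rw [intervalIntegral.integral_congr hz]
            simp
          have hsplit : (∫ s in x..T, h x s i j * ((φ s : ℝ) : ℂ)) = G x := by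
            rw [← intervalIntegral.integral_add_adjacent_intervals int1 int2, hzero1, zero_add]
          show _ + _ = _
          rw [hsplit, hdisj x]
          simp
      rw [intervalIntegral.integral_congr hL] at KI
      have hsupp : Function.support (fun x => ((ψ x : ℝ) : ℂ) * G x) ⊆ Ioc 0 T := by
        intro x hx
        have hψx : ψ x ≠ 0 := by
          intro h0
          apply hx
          simp [h0]
        have hxm : x ∈ Ioo 0 b := hψs (subset_tsupport _ (Function.mem_support.2 hψx))
        exact ⟨hxm.1, le_of_lt (lt_trans hxm.2 hbT)⟩
      rw [← intervalIntegral.integral_eq_integral_of_support_subset hsupp]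
      exact KI
    exact loc1 isOpen_Ioo hGc (⟨hx0, hxb⟩ : x₀ ∈ Ioo 0 b) claim
  have hcont2 : Continuous fun s => h x₀ s i j := (hh i j).comp (Continuous.prodMk_right x₀)
  apply loc1 isOpen_Ioo hcont2 (⟨hbs, hsT⟩ : s₀ ∈ Ioo b T)
  intro φ hφ hφc hφs
  have hstep := step1 φ hφ hφc hφs
  have hsupp : Function.support (fun s => ((φ s : ℝ) : ℂ) * h x₀ s i j) ⊆ Ioc b T := by
    intro s hs
    have hφs0 : φ s ≠ 0 := by
      intro h0
      apply hs
      simp [h0]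
    have hsm : s ∈ Ioo b T := hφs (subset_tsupport _ (Function.mem_support.2 hφs0))
    exact ⟨hsm.1, hsm.2.le⟩
  rw [← intervalIntegral.integral_eq_integral_of_support_subset hsupp]
  rw [← hstep]
  apply intervalIntegral.integral_congr
  intro s _
  ring

end Stmt18

namespace Stmt18

lemma Vherm {T : ℝ} (hT : 0 < T) {V : ℝ → Matrix (Fin 2) (Fin 2) ℂ}
    (hV : ∀ i j, Continuous fun x => V x i j)
    {h : ℝ → ℝ → Matrix (Fin 2) (Fin 2) ℂ}
    (hh : ∀ i j, Continuous fun z : ℝ × ℝ => h z.1 z.2 i j)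
    (hsym : ∀ y z : ℝ → Fin 2 → ℂ, memD T y → memD T z →
      (∫ x in (0 : ℝ)..T, ∑ k, Lop18 T V h y x k * (starRingEnd ℂ) (z x k))
        = ∫ x in (0 : ℝ)..T, ∑ k, y x k * (starRingEnd ℂ) (Lop18 T V h z x k))
    (hzero : ∀ p ∈ DeltaT T, ∀ i j, h p.1 p.2 i j = 0)
    (i j : Fin 2) {x₀ : ℝ} (hx0 : x₀ ∈ Ioo 0 T) :
    V x₀ i j - (starRingEnd ℂ) (V x₀ j i) = 0 := by
  set δ : ℝ := min x₀ (T - x₀) / 2 with hδdef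
  have hδ0 : 0 < δ := by
    have h1 : 0 < min x₀ (T - x₀) := lt_min hx0.1 (sub_pos.2 hx0.2)
    rw [hδdef]; linarith
  have hδx : δ < x₀ := by
    have := min_le_left x₀ (T - x₀)
    rw [hδdef]; linarith [hx0.1]
  have hδT : x₀ + δ < T := by
    have := min_le_right x₀ (T - x₀)
    rw [hδdef]; linarith [hx0.2]
  have hball : closedBall x₀ δ ⊆ Ioo 0 T := by
    intro y hy
    rw [Metric.mem_closedBall, Real.dist_eq] at hy
    have := abs_le.1 hy
    constructor <;> [linarith [this.1]; linarith [this.2]]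
  set ψ₀ : ContDiffBump x₀ := ⟨δ/2, δ, by linarith, by linarith⟩ with hψ₀def
  have hψsupp : tsupport (↑ψ₀ : ℝ → ℝ) ⊆ Ioo 0 T := by
    rw [ψ₀.tsupport_eq]; exact hball
  have hWc : Continuous fun x => V x i j - (starRingEnd ℂ) (V x j i) :=
    (hV i j).sub (continuous_star.comp (hV j i))
  apply loc1 isOpen_ball hWc (mem_ball_self (by linarith : (0:ℝ) < δ/2))
  intro φ hφ hφc hφs
  have hφsT : tsupport φ ⊆ Ioo 0 T :=
    hφs.trans ((ball_subset_closedBall.trans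
      (closedBall_subset_closedBall (by linarith))).trans hball)
  have KI := keyIdentity hT hV hh hsym i j hφ hφc hφsT
    (ψ₀.contDiff (n := ⊤)) ψ₀.hasCompactSupport hψsupp
  have hker : ∀ (a c : Fin 2) (χ : ℝ → ℝ), ∀ x ∈ Icc (0:ℝ) T,
      (∫ s in x..T, h x s a c * ((χ s : ℝ) : ℂ)) = 0 := by
    intro a c χ x hx
    have hz : EqOn (fun s => h x s a c * ((χ s : ℝ) : ℂ)) (fun _ => (0:ℂ)) (uIcc x T) := by
      intro s hs
      rw [uIcc_of_le hx.2] at hs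
      have h0 : h x s a c = 0 := hzero (x, s) ⟨hx.1, hs.1, hs.2⟩ a c
      show h x s a c * ((χ s : ℝ) : ℂ) = 0
      rw [h0, zero_mul]
    rw [intervalIntegral.integral_congr hz]
    simp
  have hφψ : ∀ x : ℝ, φ x * ψ₀ x = φ x := by
    intro x
    rcases eq_or_ne (φ x) 0 with h0 | h0
    · simp [h0]
    · have hxm : x ∈ ball x₀ (δ/2) := hφs (subset_tsupport _ (Function.mem_support.2 h0))
      rw [ψ₀.one_of_mem_closedBall (ball_subset_closedBall hxm)]
      ring
  have hcast : ∀ x : ℝ, ((φ x : ℝ) : ℂ) * ((ψ₀ x : ℝ) : ℂ) = ((φ x : ℝ) : ℂ) := by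
    intro x
    rw [← Complex.ofReal_mul, hφψ x]
  have hL : EqOn (fun x => V x i j * (((φ x : ℝ) : ℂ) * ((ψ₀ x : ℝ) : ℂ))
      + ((ψ₀ x : ℝ) : ℂ) * ∫ s in x..T, h x s i j * ((φ s : ℝ) : ℂ))
      (fun x => V x i j * ((φ x : ℝ) : ℂ)) (uIcc (0:ℝ) T) := by
    intro x hx
    rw [uIcc_of_le hT.le] at hx
    show _ + _ = _
    rw [hker i j φ x hx, hcast x]
    ring
  have hR : EqOn (fun x => (starRingEnd ℂ) (V x j i) * (((φ x : ℝ) : ℂ) * ((ψ₀ x : ℝ) : ℂ))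
      + ((φ x : ℝ) : ℂ) * (starRingEnd ℂ) (∫ s in x..T, h x s j i * ((ψ₀ s : ℝ) : ℂ)))
      (fun x => (starRingEnd ℂ) (V x j i) * ((φ x : ℝ) : ℂ)) (uIcc (0:ℝ) T) := by
    intro x hx
    rw [uIcc_of_le hT.le] at hx
    show _ + _ = _
    rw [hker j i (↑ψ₀) x hx, hcast x, map_zero]
    ring
  rw [intervalIntegral.integral_congr hL, intervalIntegral.integral_congr hR] at KI
  have int1 : IntervalIntegrable (fun x => V x i j * ((φ x : ℝ) : ℂ)) volume 0 T :=
    ((hV i j).mul (Complex.continuous_ofReal.comp hφ.continuous)).intervalIntegrable 0 T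
  have int2 : IntervalIntegrable
      (fun x => (starRingEnd ℂ) (V x j i) * ((φ x : ℝ) : ℂ)) volume 0 T :=
    ((continuous_star.comp (hV j i)).mul
      (Complex.continuous_ofReal.comp hφ.continuous)).intervalIntegrable 0 T
  have hzeroInt : (∫ x in (0:ℝ)..T,
      (V x i j * ((φ x : ℝ) : ℂ) - (starRingEnd ℂ) (V x j i) * ((φ x : ℝ) : ℂ))) = 0 := by
    rw [intervalIntegral.integral_sub int1 int2, KI, sub_self]
  have hsupp : Function.support
      (fun x => ((φ x : ℝ) : ℂ) * (V x i j - (starRingEnd ℂ) (V x j i))) ⊆ Ioc 0 T := by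
    intro x hx
    have hφx : φ x ≠ 0 := by
      intro h0
      apply hx
      simp [h0]
    have hxm : x ∈ Ioo 0 T := hφsT (subset_tsupport _ (Function.mem_support.2 hφx))
    exact ⟨hxm.1, hxm.2.le⟩
  rw [← intervalIntegral.integral_eq_integral_of_support_subset hsupp, ← hzeroInt]
  apply intervalIntegral.integral_congr
  intro x _
  ring

end Stmt18

namespace Stmt18

open Filter Topology in
lemma DeltaT_subset_closure {T : ℝ} (hT : 0 < T) :
    DeltaT T ⊆ closure {p : ℝ × ℝ | 0 < p.1 ∧ p.1 < p.2 ∧ p.2 < T} := by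
  rintro ⟨x, s⟩ ⟨h1, h2, h3⟩
  have htend : Tendsto (fun n : ℕ => (1:ℝ)/(n+1)) atTop (𝓝 0) :=
    tendsto_one_div_add_atTop_nhds_zero_nat
  have hu1 : Tendsto (fun n : ℕ => x + (1/(n+1)) * (T/3 - x)) atTop (𝓝 x) := by
    have h0 : Tendsto (fun n : ℕ => (x : ℝ) + (1/(n+1)) * (T/3 - x)) atTop
        (𝓝 (x + 0 * (T/3 - x))) :=
      (tendsto_const_nhds (x := x)).add (htend.mul (tendsto_const_nhds (x := T/3 - x)))
    simpa using h0
  have hu2 : Tendsto (fun n : ℕ => s + (1/(n+1)) * (2*T/3 - s)) atTop (𝓝 s) := by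
    have h0 : Tendsto (fun n : ℕ => (s : ℝ) + (1/(n+1)) * (2*T/3 - s)) atTop
        (𝓝 (s + 0 * (2*T/3 - s))) :=
      (tendsto_const_nhds (x := s)).add (htend.mul (tendsto_const_nhds (x := 2*T/3 - s)))
    simpa using h0
  apply mem_closure_of_tendsto (hu1.prodMk_nhds hu2)
  apply Eventually.of_forall
  intro n
  set t : ℝ := (1:ℝ)/(n+1) with htdef
  have hn1 : (1:ℝ) ≤ (n:ℝ) + 1 := by
    have : (0:ℝ) ≤ (n:ℝ) := Nat.cast_nonneg n
    linarith
  have ht0 : 0 < t := by rw [htdef]; positivity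
  have ht1 : t ≤ 1 := by rw [htdef]; rw [div_le_one (by linarith)]; linarith
  refine ⟨?_, ?_, ?_⟩
  · show 0 < x + t * (T/3 - x)
    nlinarith
  · show x + t * (T/3 - x) < s + t * (2*T/3 - s)
    nlinarith
  · show s + t * (2*T/3 - s) < T
    nlinarith

end Stmt18

section
open Stmt18

/-- Rigidity: symmetry of `L = J d/dx + V + ∫ h` on the domain `D`
forces the potential `V` to be pointwise Hermitian and the triangular kernel `h`
to vanish identically. -/
theorem stmt18 (T : ℝ) (hT : 0 < T)
    (V : ℝ → Matrix (Fin 2) (Fin 2) ℂ)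
    (hV : ∀ i j, ContinuousOn (fun x => V x i j) (Icc 0 T))
    (h : ℝ → ℝ → Matrix (Fin 2) (Fin 2) ℂ)
    (hh : ∀ i j, ContinuousOn (fun z : ℝ × ℝ => h z.1 z.2 i j) (DeltaT T))
    (hsym : ∀ y z : ℝ → Fin 2 → ℂ, memD T y → memD T z →
      (∫ x in (0 : ℝ)..T, ∑ i, Lop18 T V h y x i * (starRingEnd ℂ) (z x i))
        = ∫ x in (0 : ℝ)..T, ∑ i, y x i * (starRingEnd ℂ) (Lop18 T V h z x i)) :
    (∀ x ∈ Icc (0 : ℝ) T, (V x)ᴴ = V x) ∧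
    (∀ x s : ℝ, 0 ≤ x → x ≤ s → s ≤ T → h x s = 0) := by
  classical
  -- continuous extensions of `V` and `h`
  set Vc : ℝ → Matrix (Fin 2) (Fin 2) ℂ :=
    fun x => V ((projIcc 0 T hT.le x : Icc (0:ℝ) T) : ℝ) with hVcdef
  have VcEq : ∀ x ∈ Icc (0:ℝ) T, Vc x = V x := by
    intro x hx
    rw [hVcdef]
    simp [projIcc_of_mem hT.le hx]
  have hVc : ∀ i j, Continuous fun x => Vc x i j := by
    intro i j
    exact (hV i j).comp_continuous (continuous_subtype_val.comp continuous_projIcc)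
      (fun x => (projIcc 0 T hT.le x).2)
  set r : ℝ × ℝ → ℝ × ℝ :=
    fun p => (min (max p.1 0) (min (max p.2 0) T), min (max p.2 0) T) with hrdef
  have hrc : Continuous r :=
    ((continuous_fst.max continuous_const).min
      ((continuous_snd.max continuous_const).min continuous_const)).prodMk
      ((continuous_snd.max continuous_const).min continuous_const)
  have hrmem : ∀ p, r p ∈ DeltaT T := fun p =>
    ⟨le_min (le_max_right _ _) (le_min (le_max_right _ _) hT.le),
      min_le_right _ _, min_le_right _ _⟩
  have hrid : ∀ p ∈ DeltaT T, r p = p := by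
    rintro ⟨a, c⟩ ⟨h1, h2, h3⟩
    have hc0 : (0:ℝ) ≤ c := le_trans h1 h2
    show (min (max a 0) (min (max c 0) T), min (max c 0) T) = (a, c)
    rw [max_eq_left h1, max_eq_left hc0, min_eq_left h3, min_eq_left h2]
  set hker : ℝ → ℝ → Matrix (Fin 2) (Fin 2) ℂ :=
    fun a c => h (r (a, c)).1 (r (a, c)).2 with hkerdef
  have hhc : ∀ i j, Continuous fun z : ℝ × ℝ => hker z.1 z.2 i j := by
    intro i j
    have heq : (fun z : ℝ × ℝ => hker z.1 z.2 i j)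
        = ((fun w : ℝ × ℝ => h w.1 w.2 i j) ∘ r) := rfl
    rw [heq]
    exact (hh i j).comp_continuous hrc hrmem
  have hcEq : ∀ p ∈ DeltaT T, hker p.1 p.2 = h p.1 p.2 := by
    intro p hp
    show h (r p).1 (r p).2 = h p.1 p.2
    rw [hrid p hp]
  -- transfer the symmetry hypothesis to the extensions
  have LopEq : ∀ y : ℝ → Fin 2 → ℂ, ∀ x ∈ Icc (0:ℝ) T,
      Lop18 T V h y x = Lop18 T Vc hker y x := by
    intro y x hx
    show _ + _ + _ = _ + _ + _
    have e1 : (V x).mulVec (y x) = (Vc x).mulVec (y x) := by rw [VcEq x hx]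
    have e2 : (∫ s in x..T, (h x s).mulVec (y s))
        = ∫ s in x..T, (hker x s).mulVec (y s) := by
      apply intervalIntegral.integral_congr
      intro s hs
      rw [uIcc_of_le hx.2] at hs
      have heq : hker x s = h x s := hcEq (x, s) ⟨hx.1, hs.1, hs.2⟩
      show (h x s).mulVec (y s) = (hker x s).mulVec (y s)
      rw [heq]
    rw [e1, e2]
  have hsymc : ∀ y z : ℝ → Fin 2 → ℂ, memD T y → memD T z →
      (∫ x in (0 : ℝ)..T, ∑ k, Lop18 T Vc hker y x k * (starRingEnd ℂ) (z x k))
        = ∫ x in (0 : ℝ)..T, ∑ k, y x k * (starRingEnd ℂ) (Lop18 T Vc hker z x k) := by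
    intro y z hy hz
    have H := hsym y z hy hz
    have E1 : (∫ x in (0:ℝ)..T, ∑ k, Lop18 T Vc hker y x k * (starRingEnd ℂ) (z x k))
        = ∫ x in (0:ℝ)..T, ∑ k, Lop18 T V h y x k * (starRingEnd ℂ) (z x k) := by
      apply intervalIntegral.integral_congr
      intro x hx
      rw [uIcc_of_le hT.le] at hx
      show (∑ k, Lop18 T Vc hker y x k * (starRingEnd ℂ) (z x k))
          = ∑ k, Lop18 T V h y x k * (starRingEnd ℂ) (z x k)
      rw [LopEq y x hx]
    have E2 : (∫ x in (0:ℝ)..T, ∑ k, y x k * (starRingEnd ℂ) (Lop18 T Vc hker z x k))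
        = ∫ x in (0:ℝ)..T, ∑ k, y x k * (starRingEnd ℂ) (Lop18 T V h z x k) := by
      apply intervalIntegral.integral_congr
      intro x hx
      rw [uIcc_of_le hT.le] at hx
      show (∑ k, y x k * (starRingEnd ℂ) (Lop18 T Vc hker z x k))
          = ∑ k, y x k * (starRingEnd ℂ) (Lop18 T V h z x k)
      rw [LopEq z x hx]
    rw [E1, E2]
    exact H
  -- the kernel vanishes on the closed triangle
  have hDelta : ∀ p ∈ DeltaT T, ∀ i j : Fin 2, hker p.1 p.2 i j = 0 := by
    intro p hp i j
    have hEq : EqOn (fun q : ℝ × ℝ => hker q.1 q.2 i j) (fun _ => (0:ℂ))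
        {q : ℝ × ℝ | 0 < q.1 ∧ q.1 < q.2 ∧ q.2 < T} :=
      fun q hq => hvanish hT hVc hhc hsymc i j hq.1 hq.2.1 hq.2.2
    exact (hEq.closure (hhc i j) continuous_const) (DeltaT_subset_closure hT hp)
  -- the potential defect vanishes on [0, T]
  have hVW : ∀ i j : Fin 2, ∀ x ∈ Icc (0:ℝ) T,
      Vc x i j - (starRingEnd ℂ) (Vc x j i) = 0 := by
    intro i j
    have hEq : EqOn (fun x => Vc x i j - (starRingEnd ℂ) (Vc x j i)) (fun _ => (0:ℂ))
        (Ioo 0 T) := fun x hx => Vherm hT hVc hhc hsymc hDelta i j hx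
    have hcl := hEq.closure ((hVc i j).sub (continuous_star.comp (hVc j i))) continuous_const
    rw [closure_Ioo hT.ne] at hcl
    exact fun x hx => hcl hx
  constructor
  · intro x hx
    ext i j
    have h1 := hVW i j x hx
    rw [VcEq x hx] at h1
    rw [Matrix.conjTranspose_apply]
    exact (sub_eq_zero.1 h1).symm
  · intro x s h0 hxs hsT
    ext i j
    have hp : (x, s) ∈ DeltaT T := ⟨h0, hxs, hsT⟩
    have hz := hDelta (x, s) hp i j
    have hEq : hker x s = h x s := hcEq (x, s) hp
    calc h x s i j = hker x s i j := by rw [hEq]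
      _ = 0 := hz

end
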